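/- With the same setup as the variation of fundamental forms (metrics I_t with second fundamental forms II_t, extrinsic curvature K_e,t = det B_t, area forms da_t of I_t), the first variation of the area form of I satisfies δ(da) = (−δK_e/(2K_e) + (1/2)⟨δII, II⟩_{II})·da, where da = da_{II}/√K_e. -/

import Mathlib

open Matrix

/-- First variation of the area form of `I`: with `II_t = I_t·B_t`, `K_{e,t} = det B_t > 0`
and `da_t = √det(I_t) = da_{II_t}/√K_{e,t}`, one has
`δ(da) = (−δK_e/(2K_e) + (1/2)⟨δII, II⟩_{II})·da`, where
`⟨δII, II⟩_{II} = tr(II⁻¹·δII)` and `δII = δI·B + I·δB`. -/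
theorem stmt_10 (I B : ℝ → Matrix (Fin 2) (Fin 2) ℝ)
    (δI δB : Matrix (Fin 2) (Fin 2) ℝ) (δKe : ℝ)
    (hpos : ∀ t, (I t).PosDef) (hIIpos : ∀ t, (I t * B t).PosDef)
    (hsa : ∀ t, I t * B t = (B t)ᵀ * I t)
    (hKe : ∀ t, 0 < (B t).det)
    (hId : ∀ i j, HasDerivAt (fun t => I t i j) (δI i j) 0)
    (hBd : ∀ i j, HasDerivAt (fun t => B t i j) (δB i j) 0)
    (hKed : HasDerivAt (fun t => (B t).det) δKe 0) :
    HasDerivAt (fun t => Real.sqrt ((I t).det))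
      ((-δKe / (2 * (B 0).det)
          + (1 / 2) * Matrix.trace ((I 0 * B 0)⁻¹ * (δI * B 0 + I 0 * δB)))
        * Real.sqrt ((I 0).det)) 0 := by
  have hd : 0 < (I 0).det := (hpos 0).det_pos
  have hb : (B 0).det ≠ 0 := (hKe 0).ne'
  -- derivative of det (I t)
  have hdet : HasDerivAt (fun t => (I t).det)
      (δI 0 0 * I 0 1 1 + I 0 0 0 * δI 1 1 - (δI 0 1 * I 0 1 0 + I 0 0 1 * δI 1 0)) 0 := by
    simp only [Matrix.det_fin_two]
    exact (((hId 0 0).mul (hId 1 1)).sub ((hId 0 1).mul (hId 1 0)))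
  -- derivative of det (B t)
  have hdetB : HasDerivAt (fun t => (B t).det)
      (δB 0 0 * B 0 1 1 + B 0 0 0 * δB 1 1 - (δB 0 1 * B 0 1 0 + B 0 0 1 * δB 1 0)) 0 := by
    simp only [Matrix.det_fin_two]
    exact (((hBd 0 0).mul (hBd 1 1)).sub ((hBd 0 1).mul (hBd 1 0)))
  have hKeval : δKe = δB 0 0 * B 0 1 1 + B 0 0 0 * δB 1 1
      - (δB 0 1 * B 0 1 0 + B 0 0 1 * δB 1 0) := hKed.unique hdetB
  have hsq := (Real.hasDerivAt_sqrt hd.ne').comp 0 hdet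
  convert hsq using 1
  · rfl
  · rfl
  · rfl
  have hsne : Real.sqrt ((I 0).det) ≠ 0 := (Real.sqrt_pos.2 hd).ne'
  have hss : Real.sqrt ((I 0).det) * Real.sqrt ((I 0).det) = (I 0).det :=
    Real.mul_self_sqrt hd.le
  have hdetII : (I 0 * B 0).det = (I 0).det * (B 0).det := Matrix.det_mul _ _
  have hde : (I 0).det = I 0 0 0 * I 0 1 1 - I 0 0 1 * I 0 1 0 := Matrix.det_fin_two _
  have hdb : (B 0).det = B 0 0 0 * B 0 1 1 - B 0 0 1 * B 0 1 0 := Matrix.det_fin_two _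
  set c : ℝ := -δKe / (2 * (B 0).det)
      + (1 / 2) * Matrix.trace ((I 0 * B 0)⁻¹ * (δI * B 0 + I 0 * δB)) with hc
  have key : 2 * c * (I 0).det
      = δI 0 0 * I 0 1 1 + I 0 0 0 * δI 1 1 - (δI 0 1 * I 0 1 0 + I 0 0 1 * δI 1 0) := by
    rw [hc, Matrix.inv_def]
    simp only [Ring.inverse_eq_inv', Matrix.trace_fin_two, Matrix.smul_apply,
      Matrix.mul_apply, Fin.sum_univ_two, Matrix.adjugate_fin_two, hdetII,
      Matrix.of_apply, Matrix.cons_val', Matrix.cons_val_zero,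
      Matrix.cons_val_one, Matrix.head_cons, Matrix.head_fin_const, Matrix.add_apply,
      smul_eq_mul, Matrix.neg_apply, hKeval]
    have hbne : B 0 0 0 * B 0 1 1 - B 0 0 1 * B 0 1 0 ≠ 0 := hdb ▸ hb
    have hdne : I 0 0 0 * I 0 1 1 - I 0 0 1 * I 0 1 0 ≠ 0 := hde ▸ hd.ne'
    rw [hde, hdb]
    field_simp
    have hX : B 0 1 1 * B 0 0 0 - B 0 1 0 * B 0 0 1 ≠ 0 := by intro h; apply hbne; linarith
    linear_combination (I 0 0 0 * δI 1 1 + I 0 1 1 * δI 0 0 - I 0 0 1 * δI 1 0 - I 0 1 0 * δI 0 1) * (mul_inv_cancel₀ hX)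
  show c * Real.sqrt ((I 0).det) = _
  rw [← key, ← hss]
  clear_value c
  field_simp
  linear_combination c * Real.sq_sqrt (sq_nonneg (Real.sqrt ((I 0).det)))
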